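/- Let Λ be an approximate subgroup of a countable group Γ with left-invariant proper weighted word metric d associated to weight w, let R > 0, set T_R := {g ∈ Γ : w(g) ≤ R} and Γ_R := ⟨T_R⟩. Suppose F ⊆ Γ is a finite set with Λ⁴ ⊆ FΛ² and F ⊆ T_R. Then Ξ_R := Λ² ∩ Γ_R satisfies Ξ_R² ⊆ F·Ξ_R; in particular Ξ_R is an approximate subgroup of the finitely generated group Γ_R. -/
import Mathlib


open Pointwise

/-- Let `L` be an approximate subgroup of a countable group `G` with proper weight `w`, let
`T_R = {g : w g ≤ R}`, `Γ_R = ⟨T_R⟩`, and suppose `F` is finite with `L⁴ ⊆ F·L²` and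
`F ⊆ T_R`. Then `Ξ_R = L² ∩ Γ_R` satisfies `Ξ_R² ⊆ F·Ξ_R`; in particular `Ξ_R` is an
approximate subgroup of the finitely generated group `Γ_R`. -/
theorem xi_R_approx_subgroup {G : Type*} [Group G] [Countable G]
    (w : G → ℝ) (hwproper : ∀ C : ℝ, {g : G | w g ≤ C}.Finite)
    (L : Set G) (hsym : L⁻¹ = L) (hone : (1 : G) ∈ L)
    (R : ℝ) (hR : 0 < R)
    (F : Set G) (hFfin : F.Finite) (hF4 : L ^ 4 ⊆ F * L ^ 2)
    (hFT : F ⊆ {g : G | w g ≤ R}) :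
    let ΓR := Subgroup.closure {g : G | w g ≤ R}
    let ΞR := L ^ 2 ∩ (ΓR : Set G)
    ΞR⁻¹ = ΞR ∧ (1 : G) ∈ ΞR ∧ ΞR * ΞR ⊆ F * ΞR ∧ ΓR.FG := by
  intro ΓR ΞR
  have hL2inv : (L ^ 2)⁻¹ = L ^ 2 := by
    rw [← inv_pow, hsym]
  refine ⟨?_, ?_, ?_, ?_⟩
  · ext g
    simp only [ΞR, Set.mem_inv, Set.mem_inter_iff, SetLike.mem_coe, inv_mem_iff]
    rw [← Set.mem_inv, hL2inv]
  · exact ⟨by rw [pow_two]; exact ⟨1, hone, 1, hone, mul_one 1⟩, Subgroup.one_mem _⟩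
  · rintro x ⟨a, ⟨haL, haG⟩, b, ⟨hbL, hbG⟩, rfl⟩
    have hab4 : a * b ∈ L ^ 4 := by
      have : L ^ 4 = L ^ 2 * L ^ 2 := by rw [← pow_add]
      rw [this]
      exact Set.mul_mem_mul haL hbL
    obtain ⟨f, hf, y, hy, heq⟩ := hF4 hab4
    have hfG : f ∈ ΓR := Subgroup.subset_closure (hFT hf)
    have habG : a * b ∈ ΓR := mul_mem haG hbG
    have hyG : y ∈ ΓR := by
      have : y = f⁻¹ * (a * b) := by rw [← heq]; group
      rw [this]
      exact mul_mem (inv_mem hfG) habG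
    exact ⟨f, hf, y, ⟨hy, hyG⟩, heq⟩
  · exact ⟨(hwproper R).toFinset, by rw [Set.Finite.coe_toFinset]⟩
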